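/- Let κ be an infinite cardinal and assume 2^κ = κ⁺ (an instance of GCH). Then Breaker has a winning strategy in the Maker-Breaker game MB(K_{κ,κ⁺}, K_{κ,κ⁺}). -/

import Mathlib

open Cardinal

universe u v

/-- A strategy in a transfinite positional game with moves of type `α`:
given the current turn (an ordinal) and the history of all moves made at
earlier turns, it produces a move. -/
def MBStrategy (α : Type u) : Type (u + 1) :=
  ∀ γ : Ordinal.{u}, (∀ β : Ordinal.{u}, β < γ → α) → α

/-- A completed play of a transfinite positional game on the board `board`:
an ordinal-indexed sequence of moves, each an element of the board that was not
claimed at any earlier turn, which goes on until every element of the board has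
been claimed. -/
structure MBPlay {α : Type u} (board : Set α) : Type (u + 1) where
  len : Ordinal.{u}
  move : ∀ γ : Ordinal.{u}, γ < len → α
  move_mem : ∀ γ h, move γ h ∈ board
  move_inj : ∀ γ₁ h₁ γ₂ h₂, move γ₁ h₁ = move γ₂ h₂ → γ₁ = γ₂
  complete : ∀ e ∈ board, ∃ γ h, move γ h = e

namespace MBPlay

variable {α : Type u} {board : Set α}

/-- The set of board elements claimed at the turns satisfying `turns`. -/
def claimed (p : MBPlay board) (turns : Ordinal.{u} → Prop) : Set α :=
  {e | ∃ γ h, turns γ ∧ p.move γ h = e}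

/-- The play is consistent with the player moving at the turns satisfying
`turns` using the strategy `σ`. -/
def Follows (p : MBPlay board) (turns : Ordinal.{u} → Prop) (σ : MBStrategy α) : Prop :=
  ∀ γ h, turns γ → p.move γ h = σ γ (fun β hβ => p.move β (hβ.trans h))

end MBPlay

/-- In the Maker–Breaker game the moves alternate with Maker moving first: the
turn `γ` belongs to Maker iff `γ % 2 = 0`.  In particular turn `0` and all
limit turns belong to Maker, and Breaker answers Maker's preceding move. -/
def makerTurn (γ : Ordinal.{u}) : Prop := γ % 2 = 0

/-- The turns on which Breaker moves in the Maker–Breaker game. -/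
def breakerTurn (γ : Ordinal.{u}) : Prop := γ % 2 = 1

/-- A strategy is legal for the player moving at the turns satisfying `turns`
if at every position (arising at such a turn) in which some element of the
board is still unclaimed, it produces an unclaimed element of the board. -/
def MBStrategy.IsLegal {α : Type u} (σ : MBStrategy α) (board : Set α)
    (turns : Ordinal.{u} → Prop) : Prop :=
  ∀ (γ : Ordinal.{u}) (hist : ∀ β : Ordinal.{u}, β < γ → α), turns γ →
    (∀ β h, hist β h ∈ board) →
    (∀ β₁ h₁ β₂ h₂, hist β₁ h₁ = hist β₂ h₂ → β₁ = β₂) →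
    (∃ e ∈ board, ∀ β h, hist β h ≠ e) →
    σ γ hist ∈ board ∧ ∀ β h, hist β h ≠ σ γ hist

/-- `G` contains a copy of `H`, i.e. a subgraph isomorphic to `H`; equivalently
there is an injective graph homomorphism from `H` into `G`. -/
def ContainsCopy {V : Type u} {W : Type v} (G : SimpleGraph V) (H : SimpleGraph W) : Prop :=
  ∃ f : H →g G, Function.Injective f

/-- Maker has a winning strategy in the Maker–Breaker game `MB(G, H)`:
playing at the even turns (including turn `0` and all limit turns) of a
transfinite play on the edge set of `G`, she can ensure that whatever Breaker
does at the odd turns, at the end of the play the graph formed by her claimed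
edges contains a copy of `H`. -/
def MakerWins {V : Type u} {W : Type v} (G : SimpleGraph V) (H : SimpleGraph W) : Prop :=
  ∃ σ : MBStrategy (Sym2 V), σ.IsLegal G.edgeSet makerTurn ∧
    ∀ p : MBPlay G.edgeSet, p.Follows makerTurn σ →
      ContainsCopy (SimpleGraph.fromEdgeSet (p.claimed makerTurn)) H

/-- Breaker has a winning strategy in the Maker–Breaker game `MB(G, H)`:
playing at the odd turns of a transfinite play on the edge set of `G`, he can
ensure that at the end of the play the graph formed by Maker's claimed edges
does not contain a copy of `H`. -/
def BreakerWins {V : Type u} {W : Type v} (G : SimpleGraph V) (H : SimpleGraph W) : Prop :=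
  ∃ σ : MBStrategy (Sym2 V), σ.IsLegal G.edgeSet breakerTurn ∧
    ∀ p : MBPlay G.edgeSet, p.Follows breakerTurn σ →
      ¬ ContainsCopy (SimpleGraph.fromEdgeSet (p.claimed makerTurn)) H

noncomputable section
open scoped Classical

section BreakerAux

variable {A B : Type u}

instance subrelOrdWO (p : Set Ordinal.{u}) :
    IsWellOrder (Subtype p) (Subrel ((· < ·) : Ordinal.{u} → Ordinal.{u} → Prop) p) :=
  inferInstanceAs (IsWellOrder (Subtype fun x => p x) (Subrel ((· < ·) : Ordinal.{u} → Ordinal.{u} → Prop) fun x => p x))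

lemma cross_mem (a : A) (b : B) :
    s(Sum.inl a, Sum.inr b) ∈ (completeBipartiteGraph A B).edgeSet := by
  simp [SimpleGraph.mem_edgeSet]

lemma cross_eq_iff {a a' : A} {b b' : B} :
    s(Sum.inl a, Sum.inr b) = (s(Sum.inl a', Sum.inr b') : Sym2 (A ⊕ B)) ↔ a = a' ∧ b = b' := by
  simp [Sym2.eq_iff]

lemma edge_form {e : Sym2 (A ⊕ B)} (he : e ∈ (completeBipartiteGraph A B).edgeSet) :
    ∃ a b, e = s(Sum.inl a, Sum.inr b) := by
  induction e with
  | _ x y =>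
    rw [SimpleGraph.mem_edgeSet] at he
    rcases he with ⟨h1, h2⟩ | ⟨h1, h2⟩
    · obtain ⟨a, rfl⟩ := Sum.isLeft_iff.1 h1
      obtain ⟨b, rfl⟩ := Sum.isRight_iff.1 h2
      exact ⟨a, b, rfl⟩
    · obtain ⟨b, rfl⟩ := Sum.isRight_iff.1 h1
      obtain ⟨a, rfl⟩ := Sum.isLeft_iff.1 h2
      exact ⟨a, b, Sym2.eq_swap⟩

lemma makerTurn_succ {γ : Ordinal.{u}} (h : makerTurn γ) : breakerTurn (γ + 1) := by
  unfold makerTurn at h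
  unfold breakerTurn
  conv_lhs => rw [← Ordinal.div_add_mod γ 2, h, add_zero]
  rw [Ordinal.mul_add_mod_self, Ordinal.mod_eq_of_lt one_lt_two]

lemma not_maker_breaker {γ : Ordinal.{u}} (h : makerTurn γ) (h' : breakerTurn γ) : False := by
  unfold makerTurn at h; unfold breakerTurn at h'
  rw [h] at h'
  exact zero_ne_one h'

/-- Extract the `B`-side endpoint of an edge of the complete bipartite graph. -/
noncomputable def extractB (b₀ : B) (e : Sym2 (A ⊕ B)) : B :=
  if h : ∃ b a, e = s(Sum.inl a, Sum.inr b) then h.choose else b₀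

lemma extractB_eq (b₀ : B) (a : A) (b : B) : extractB b₀ s(Sum.inl a, Sum.inr b) = b := by
  unfold extractB
  have h : ∃ b' a', (s(Sum.inl a, Sum.inr b) : Sym2 (A ⊕ B)) = s(Sum.inl a', Sum.inr b') :=
    ⟨b, a, rfl⟩
  rw [dif_pos h]
  obtain ⟨a2, h2⟩ := h.choose_spec
  exact ((cross_eq_iff.mp h2).2).symm

/-- The bookkeeping set: Maker's earlier turns (before `δ`) at the vertex `b`. -/
def histSet (γ : Ordinal.{u}) (hist : ∀ β : Ordinal.{u}, β < γ → Sym2 (A ⊕ B))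
    (δ : Ordinal.{u}) (hlt : δ < γ) (b : B) : Set Ordinal.{u} :=
  {β | ∃ h : β < δ, makerTurn β ∧ ∃ a'', hist β (h.trans hlt) = s(Sum.inl a'', Sum.inr b)}

noncomputable def breakerMove (b₀ : B) (Fset : Ordinal.{u} → Set A)
    (task : B → Ordinal.{u+1} → Ordinal.{u}) (γ : Ordinal.{u})
    (hist : ∀ β : Ordinal.{u}, β < γ → Sym2 (A ⊕ B)) (δ : Ordinal.{u}) (e : Sym2 (A ⊕ B))
    (hub : ∃ e' ∈ (completeBipartiteGraph A B).edgeSet, ∀ β h, hist β h ≠ e') : Sym2 (A ⊕ B) :=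
  if hlt : δ < γ then
    if hbl : ∃ a', a' ∈ Fset (task (extractB b₀ e)
          (Ordinal.type (Subrel ((· < ·) : Ordinal.{u} → Ordinal.{u} → Prop)
            (histSet γ hist δ hlt (extractB b₀ e))))) ∧
        ∀ β h, hist β h ≠ s(Sum.inl a', Sum.inr (extractB b₀ e)) then
      s(Sum.inl hbl.choose, Sum.inr (extractB b₀ e))
    else hub.choose
  else hub.choose

lemma breakerMove_good (b₀ : B) (Fset : Ordinal.{u} → Set A)
    (task : B → Ordinal.{u+1} → Ordinal.{u}) (γ : Ordinal.{u})
    (hist : ∀ β : Ordinal.{u}, β < γ → Sym2 (A ⊕ B)) (δ : Ordinal.{u}) (e : Sym2 (A ⊕ B))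
    (hub : ∃ e' ∈ (completeBipartiteGraph A B).edgeSet, ∀ β h, hist β h ≠ e') :
    breakerMove b₀ Fset task γ hist δ e hub ∈ (completeBipartiteGraph A B).edgeSet ∧
      ∀ β h, hist β h ≠ breakerMove b₀ Fset task γ hist δ e hub := by
  unfold breakerMove
  split
  · split
    · next hbl => exact ⟨cross_mem _ _, hbl.choose_spec.2⟩
    · exact ⟨hub.choose_spec.1, hub.choose_spec.2⟩
  · exact ⟨hub.choose_spec.1, hub.choose_spec.2⟩

lemma breakerMove_spec (b₀ : B) (Fset : Ordinal.{u} → Set A)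
    (task : B → Ordinal.{u+1} → Ordinal.{u}) (γ : Ordinal.{u})
    (hist : ∀ β : Ordinal.{u}, β < γ → Sym2 (A ⊕ B)) (δ : Ordinal.{u}) (e : Sym2 (A ⊕ B))
    (hub : ∃ e' ∈ (completeBipartiteGraph A B).edgeSet, ∀ β h, hist β h ≠ e')
    (hlt : δ < γ) :
    (∃ a', a' ∈ Fset (task (extractB b₀ e)
            (Ordinal.type (Subrel ((· < ·) : Ordinal.{u} → Ordinal.{u} → Prop)
              (histSet γ hist δ hlt (extractB b₀ e))))) ∧
        (∀ β h, hist β h ≠ s(Sum.inl a', Sum.inr (extractB b₀ e))) ∧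
        breakerMove b₀ Fset task γ hist δ e hub = s(Sum.inl a', Sum.inr (extractB b₀ e))) ∨
    (∀ a' ∈ Fset (task (extractB b₀ e)
            (Ordinal.type (Subrel ((· < ·) : Ordinal.{u} → Ordinal.{u} → Prop)
              (histSet γ hist δ hlt (extractB b₀ e))))),
        ∃ β h, hist β h = s(Sum.inl a', Sum.inr (extractB b₀ e))) := by
  unfold breakerMove
  rw [dif_pos hlt]
  split
  · next hbl => exact Or.inl ⟨hbl.choose, hbl.choose_spec.1, hbl.choose_spec.2, rfl⟩
  · next hbl =>
    push_neg at hbl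
    exact Or.inr hbl

noncomputable def breakerStrat (b₀ : B) (e₀ : Sym2 (A ⊕ B)) (Fset : Ordinal.{u} → Set A)
    (task : B → Ordinal.{u+1} → Ordinal.{u}) : MBStrategy (Sym2 (A ⊕ B)) := fun γ hist =>
  if hub : ∃ e' ∈ (completeBipartiteGraph A B).edgeSet, ∀ β h, hist β h ≠ e' then
    if hδ : ∃ δ, γ = δ + 1 then
      if hlt : hδ.choose < γ then
        breakerMove b₀ Fset task γ hist hδ.choose (hist hδ.choose hlt) hub
      else hub.choose
    else hub.choose
  else e₀

lemma breakerStrat_succ (b₀ : B) (e₀ : Sym2 (A ⊕ B)) (Fset : Ordinal.{u} → Set A)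
    (task : B → Ordinal.{u+1} → Ordinal.{u}) (δ : Ordinal.{u})
    (hist : ∀ β : Ordinal.{u}, β < δ + 1 → Sym2 (A ⊕ B))
    (hub : ∃ e' ∈ (completeBipartiteGraph A B).edgeSet, ∀ β h, hist β h ≠ e')
    (hlt : δ < δ + 1) :
    breakerStrat b₀ e₀ Fset task (δ + 1) hist =
      breakerMove b₀ Fset task (δ + 1) hist δ (hist δ hlt) hub := by
  unfold breakerStrat
  have hδ : ∃ δ', δ + 1 = δ' + 1 := ⟨δ, rfl⟩
  rw [dif_pos hub, dif_pos hδ]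
  have paone : ∀ x : Ordinal.{u}, Ordinal.pred (x + 1) = x := fun x => by
    rw [Ordinal.add_one_eq_succ, Ordinal.pred_succ]
  have hc : hδ.choose = δ := by
    have h3 := congrArg Ordinal.pred hδ.choose_spec
    rw [paone, paone] at h3
    exact h3.symm
  rw [show hδ.choose = δ from hc, dif_pos hlt]


/-- order type of an initial segment of a set of ordinals. -/
lemma type_subrel_inter (T : Set Ordinal.{u}) (γ : Ordinal.{u}) (hγ : γ ∈ T) :
    Ordinal.type (Subrel ((· < ·) : Ordinal.{u} → Ordinal.{u} → Prop) {β | β ∈ T ∧ β < γ}) =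
      Ordinal.typein (Subrel ((· < ·) : Ordinal.{u} → Ordinal.{u} → Prop) T) ⟨γ, hγ⟩ := by
  rw [← Ordinal.type_subrel]
  exact RelIso.ordinal_type_eq
    { toFun := fun z => ⟨⟨z.1, z.2.1⟩, z.2.2⟩
      invFun := fun y => ⟨y.1.1, y.1.2, y.2⟩
      left_inv := fun z => rfl
      right_inv := fun y => rfl
      map_rel_iff' := Iff.rfl }

/-- From a copy of the complete bipartite graph inside a subgraph of itself given by an
edge set `M`, extract injections on both sides with all cross edges in `M`. -/
lemma exists_uv {A B : Type u} (hAne : Nonempty A) (hBne : Nonempty B) (hAB : #A < #B)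
    {M : Set (Sym2 (A ⊕ B))} (hM : M ⊆ (completeBipartiteGraph A B).edgeSet)
    (h : ContainsCopy (SimpleGraph.fromEdgeSet M) (completeBipartiteGraph A B)) :
    ∃ (u : A → A) (v : B → B), Function.Injective u ∧ Function.Injective v ∧
      ∀ a b, s(Sum.inl (u a), Sum.inr (v b)) ∈ M := by
  obtain ⟨f, finj⟩ := h
  have hmem : ∀ a b, s(f (Sum.inl a), f (Sum.inr b)) ∈ M := by
    intro a b
    have hadj : (SimpleGraph.fromEdgeSet M).Adj (f (Sum.inl a)) (f (Sum.inr b)) :=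
      f.map_adj (by simp)
    exact ((SimpleGraph.fromEdgeSet_adj M).mp hadj).1
  obtain ⟨a₀⟩ := hAne
  obtain ⟨b₀⟩ := hBne
  rcases h0 : f (Sum.inl a₀) with x₀ | y₀
  · -- the left side maps into the left side
    have hv : ∀ b, ∃ y, f (Sum.inr b) = Sum.inr y := by
      intro b
      obtain ⟨a', b', he⟩ := edge_form (hM (hmem a₀ b))
      rw [h0] at he
      rcases Sym2.eq_iff.mp he with ⟨h1, h2⟩ | ⟨h1, h2⟩
      · exact ⟨b', h2⟩
      · exact absurd h1 (by simp)
    choose v hv using hv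
    have vinj : Function.Injective v := by
      intro b b' hh
      have : f (Sum.inr b) = f (Sum.inr b') := by rw [hv b, hv b', hh]
      exact Sum.inr_injective (finj this)
    have hu : ∀ a, ∃ x, f (Sum.inl a) = Sum.inl x := by
      intro a
      obtain ⟨a', b', he⟩ := edge_form (hM (hmem a b₀))
      rw [hv b₀] at he
      rcases Sym2.eq_iff.mp he with ⟨h1, h2⟩ | ⟨h1, h2⟩
      · exact ⟨a', h1⟩
      · exact absurd h2 (by simp)
    choose u hu using hu
    have uinj : Function.Injective u := by
      intro a a' hh
      have : f (Sum.inl a) = f (Sum.inl a') := by rw [hu a, hu a', hh]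
      exact Sum.inl_injective (finj this)
    refine ⟨u, v, uinj, vinj, fun a b => ?_⟩
    have := hmem a b
    rwa [hu a, hv b] at this
  · -- impossible: the right side would inject into the left side
    exfalso
    have hw : ∀ b, ∃ x, f (Sum.inr b) = Sum.inl x := by
      intro b
      obtain ⟨a', b', he⟩ := edge_form (hM (hmem a₀ b))
      rw [h0] at he
      rcases Sym2.eq_iff.mp he with ⟨h1, h2⟩ | ⟨h1, h2⟩
      · exact absurd h1 (by simp)
      · exact ⟨a', h2⟩
    choose w hw using hw
    have winj : Function.Injective w := by
      intro b b' hh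
      have : f (Sum.inr b) = f (Sum.inr b') := by rw [hw b, hw b', hh]
      exact Sum.inr_injective (finj this)
    exact absurd (Cardinal.mk_le_of_injective winj) (not_le.mpr hAB)

end BreakerAux

/-- Let `κ` be an infinite cardinal with `2 ^ κ = κ⁺` (an
instance of GCH).  Then Breaker has a winning strategy in the Maker–Breaker
game `MB(K_{κ,κ⁺}, K_{κ,κ⁺})`. -/
theorem breakerWins_completeBipartite_self
    (κ : Cardinal.{u}) (hκ : ℵ₀ ≤ κ) (hGCH : 2 ^ κ = Order.succ κ)
    (A B : Type u) (hA : #A = κ) (hB : #B = Order.succ κ) :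
    BreakerWins (completeBipartiteGraph A B) (completeBipartiteGraph A B) := by
  classical
  have hsuccord : Order.IsSuccLimit ((Order.succ κ).ord) := Cardinal.isSuccLimit_ord (hκ.trans (Order.le_succ κ))
  have hAne : Nonempty A := Cardinal.mk_ne_zero_iff.mp (by rw [hA]; exact (aleph0_pos.trans_le hκ).ne')
  have hBne : Nonempty B := Cardinal.mk_ne_zero_iff.mp
    (by rw [hB]; exact (aleph0_pos.trans_le (hκ.trans (Order.le_succ κ))).ne')
  obtain ⟨a₀⟩ := hAne
  obtain ⟨b₀⟩ := hBne
  -- rank : B → Ordinal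
  have h1 : Cardinal.lift.{u+1} #B = Cardinal.lift.{u} #(Set.Iio ((Order.succ κ).ord)) := by
    rw [Ordinal.mk_Iio_ordinal, Cardinal.card_ord, hB, Cardinal.lift_lift]
  obtain ⟨eB⟩ := Cardinal.lift_mk_eq'.mp h1
  set rank : B → Ordinal.{u} := fun b => (eB b).1 with hrank_def
  have rank_lt : ∀ b, rank b < (Order.succ κ).ord := fun b => (eB b).2
  have rank_inj : Function.Injective rank := fun b b' hh => eB.injective (Subtype.ext hh)
  -- indexing of subsets of A
  have h2 : Cardinal.lift.{u+1} #(Set A) = Cardinal.lift.{u} #(Set.Iio ((Order.succ κ).ord)) := by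
    rw [Ordinal.mk_Iio_ordinal, Cardinal.card_ord, Cardinal.mk_set, hA, hGCH, Cardinal.lift_lift]
  obtain ⟨eX⟩ := Cardinal.lift_mk_eq'.mp h2
  set idxX : Set A → Ordinal.{u} := fun X => (eX X).1 with hidx_def
  have idx_lt : ∀ X, idxX X < (Order.succ κ).ord := fun X => (eX X).2
  set Fset : Ordinal.{u} → Set A := fun o =>
    if h : o < (Order.succ κ).ord then eX.symm ⟨o, h⟩ else ∅ with hFset_def
  have FsetIdx : ∀ X, Fset (idxX X) = X := by
    intro X
    simp only [hFset_def, hidx_def, Subtype.coe_eta, Equiv.symm_apply_apply]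
    rw [dif_pos (show ((eX X : Ordinal.{u})) < (Order.succ κ).ord from (eX X).2)]
    exact eX.symm_apply_apply X
  -- the task bookkeeping functions
  have taskEx : ∀ b : B, ∃ t : Ordinal.{u+1} → Ordinal.{u},
      ∀ α, α < rank b → ∃ ι, ι < (Cardinal.lift.{u+1} κ).ord ∧ t ι = α := by
    intro b
    rcases eq_or_ne (rank b) 0 with h0 | h0
    · exact ⟨fun _ => 0, fun α hα => absurd hα (by rw [h0]; exact not_lt_of_ge zero_le)⟩
    · have hcard : Cardinal.lift.{u+2} #(Set.Iio (rank b)) ≤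
          Cardinal.lift.{u+1} #(Set.Iio ((Cardinal.lift.{u+1} κ).ord)) := by
        rw [Ordinal.mk_Iio_ordinal, Ordinal.mk_Iio_ordinal, Cardinal.card_ord,
          Cardinal.lift_lift, Cardinal.lift_lift]
        have hle : (rank b).card ≤ κ := Order.lt_succ_iff.mp (Cardinal.lt_ord.mp (rank_lt b))
        simp only [Cardinal.lift_lift]
        have := Cardinal.lift_le.{u+2}.mpr hle
        exact le_trans (le_of_eq (by simp [Cardinal.lift_lift])) (le_trans this (le_of_eq (by simp [Cardinal.lift_lift])))
      obtain ⟨j⟩ := Cardinal.lift_mk_le'.mp hcard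
      refine ⟨fun ι => if h : ∃ x : Set.Iio (rank b), ((j x) : Ordinal.{u+1}) = ι then
        (h.choose : Ordinal.{u}) else 0, fun α hα => ?_⟩
      refine ⟨(j ⟨α, hα⟩ : Ordinal.{u+1}), (j ⟨α, hα⟩).2, ?_⟩
      have hex : ∃ x : Set.Iio (rank b), ((j x) : Ordinal.{u+1}) = (j ⟨α, hα⟩ : Ordinal.{u+1}) :=
        ⟨⟨α, hα⟩, rfl⟩
      show (if h : ∃ x : Set.Iio (rank b), ((j x) : Ordinal.{u+1}) = (j ⟨α, hα⟩ : Ordinal.{u+1})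
        then (h.choose : Ordinal.{u}) else 0) = α
      rw [dif_pos hex]
      have : hex.choose = ⟨α, hα⟩ := j.injective (Subtype.ext hex.choose_spec)
      rw [this]
  choose task htask using taskEx
  refine ⟨breakerStrat b₀ s(Sum.inl a₀, Sum.inr b₀) Fset task, ?_, ?_⟩
  · -- legality
    intro γ hist _ _ _ hne
    unfold breakerStrat
    rw [dif_pos hne]
    split
    · split
      · exact breakerMove_good _ _ _ _ _ _ _ _
      · exact ⟨hne.choose_spec.1, hne.choose_spec.2⟩
    · exact ⟨hne.choose_spec.1, hne.choose_spec.2⟩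
  · -- winning
    intro p hfol hcopy
    set M := p.claimed makerTurn with hM_def
    have move_congr : ∀ {β β' : Ordinal.{u}} (hβ : β < p.len) (hβ' : β' < p.len), β = β' →
        p.move β hβ = p.move β' hβ' := by
      rintro β β' hβ hβ' rfl; rfl
    have hM : M ⊆ (completeBipartiteGraph A B).edgeSet := by
      rintro e ⟨γ, h, _, rfl⟩; exact p.move_mem γ h
    have hAB : #A < #B := by rw [hA, hB]; exact Order.lt_succ κ
    obtain ⟨u, v, uinj, vinj, huv⟩ := exists_uv ⟨a₀⟩ ⟨b₀⟩ hAB hM hcopy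
    set X := Set.range u with hX_def
    have hXcard : #↑X = κ := by rw [hX_def, Cardinal.mk_range_eq u uinj, hA]
    have key : ∀ b1 : B, (∀ a' ∈ X, s(Sum.inl a', Sum.inr b1) ∈ M) → rank b1 ≤ idxX X := by
      intro b1 hXb
      by_contra hgt
      push_neg at hgt
      obtain ⟨ι, hι, hτ⟩ := htask b1 (idxX X) hgt
      set T : Set Ordinal.{u} := {β | ∃ h : β < p.len, makerTurn β ∧
        ∃ a', p.move β h = s(Sum.inl a', Sum.inr b1)} with hT_def
      have hclaim : ∀ a' : ↥X, ∃ β, β ∈ T ∧ ∃ hl : β < p.len,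
          p.move β hl = s(Sum.inl (a' : A), Sum.inr b1) := by
        rintro ⟨a', ha'⟩
        obtain ⟨β, hl, hmk, hmv⟩ := hXb a' ha'
        exact ⟨β, ⟨hl, hmk, a', hmv⟩, hl, hmv⟩
      choose g hgT hg using hclaim
      have ginj : Function.Injective g := by
        intro a a' hh
        obtain ⟨hl1, e1⟩ := hg a
        obtain ⟨hl2, e2⟩ := hg a'
        have hmv := move_congr hl1 hl2 hh
        have := (cross_eq_iff.mp (e1.symm.trans (hmv.trans e2))).1
        exact Subtype.ext this
      have hTcard : Cardinal.lift.{u+1} κ ≤ #↥T := by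
        rw [← hXcard]
        have := Cardinal.lift_mk_le'.mpr
          ⟨⟨fun a => (⟨g a, hgT a⟩ : ↥T), fun a a' hh => ginj (congrArg Subtype.val hh)⟩⟩
        rwa [Cardinal.lift_id'.{u, u+1}] at this
      have htype : (Cardinal.lift.{u+1} κ).ord ≤
          Ordinal.type (Subrel ((· < ·) : Ordinal.{u} → Ordinal.{u} → Prop) T) :=
        Cardinal.ord_le.mpr (by rw [Ordinal.card_type]; exact hTcard)
      have hlim : Order.IsSuccLimit ((Cardinal.lift.{u+1} κ).ord) :=
        Cardinal.isSuccLimit_ord (Cardinal.aleph0_le_lift.mpr hκ)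
      have hι1 : ι + 1 < (Cardinal.lift.{u+1} κ).ord := by
        rw [Ordinal.add_one_eq_succ]; exact hlim.succ_lt hι
      obtain ⟨x, hx⟩ : ∃ x : ↥T, Ordinal.typein (Subrel ((· < ·) : Ordinal.{u} → Ordinal.{u} → Prop) T) x = ι := Ordinal.typein_surj
        (Subrel ((· < ·) : Ordinal.{u} → Ordinal.{u} → Prop) T) (hι.trans_le htype)
      obtain ⟨x', hx'⟩ : ∃ x : ↥T, Ordinal.typein (Subrel ((· < ·) : Ordinal.{u} → Ordinal.{u} → Prop) T) x = ι + 1 := Ordinal.typein_surj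
        (Subrel ((· < ·) : Ordinal.{u} → Ordinal.{u} → Prop) T) (hι1.trans_le htype)
      have hxx : (x : Ordinal.{u}) < (x' : Ordinal.{u}) := by
        have hlt : Ordinal.typein (Subrel ((· < ·) : Ordinal.{u} → Ordinal.{u} → Prop) T) x <
            Ordinal.typein (Subrel ((· < ·) : Ordinal.{u} → Ordinal.{u} → Prop) T) x' := by
          rw [hx, hx', Ordinal.add_one_eq_succ]; exact Order.lt_succ ι
        exact (Ordinal.typein_lt_typein
          (Subrel ((· < ·) : Ordinal.{u} → Ordinal.{u} → Prop) T)).mp hlt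
      obtain ⟨hγlen, hγmk, a2, ha2⟩ := x.2
      obtain ⟨hx'len, -⟩ := x'.2
      have hγ1len : (x : Ordinal.{u}) + 1 < p.len :=
        lt_of_le_of_lt (by rw [Ordinal.add_one_eq_succ]; exact Order.succ_le_of_lt hxx) hx'len
      have hbt : breakerTurn ((x : Ordinal.{u}) + 1) := makerTurn_succ hγmk
      have hfol' := hfol ((x : Ordinal.{u}) + 1) hγ1len hbt
      set hist : ∀ β : Ordinal.{u}, β < (x : Ordinal.{u}) + 1 → Sym2 (A ⊕ B) :=
        fun β hβ => p.move β (hβ.trans hγ1len) with hhist_def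
      have hub : ∃ e' ∈ (completeBipartiteGraph A B).edgeSet, ∀ β h, hist β h ≠ e' :=
        ⟨p.move ((x : Ordinal.{u}) + 1) hγ1len, p.move_mem _ _, fun β hb heq =>
          absurd (p.move_inj β (hb.trans hγ1len) _ hγ1len heq) (ne_of_lt hb)⟩
      have hltx : (x : Ordinal.{u}) < (x : Ordinal.{u}) + 1 := by
        rw [Ordinal.add_one_eq_succ]; exact Order.lt_succ _
      rw [breakerStrat_succ b₀ s(Sum.inl a₀, Sum.inr b₀) Fset task (x : Ordinal.{u})
        hist hub hltx] at hfol'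
      have hmoveγ : hist (x : Ordinal.{u}) hltx = s(Sum.inl a2, Sum.inr b1) := ha2
      have hfol2 : p.move ((x : Ordinal.{u}) + 1) hγ1len =
          breakerMove b₀ Fset task ((x : Ordinal.{u}) + 1) hist (x : Ordinal.{u})
            s(Sum.inl a2, Sum.inr b1) hub := by
        rw [← hmoveγ]; exact hfol'
      have hspec := breakerMove_spec b₀ Fset task ((x : Ordinal.{u}) + 1) hist
        (x : Ordinal.{u}) s(Sum.inl a2, Sum.inr b1) hub hltx
      rw [extractB_eq] at hspec
      have hSeteq : histSet ((x : Ordinal.{u}) + 1) hist (x : Ordinal.{u}) hltx b1 =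
          {β | β ∈ T ∧ β < (x : Ordinal.{u})} := by
        ext β
        constructor
        · rintro ⟨hb, hmk2, a3, ha3⟩
          exact ⟨⟨hb.trans hγlen, hmk2, a3, ha3⟩, hb⟩
        · rintro ⟨⟨hl, hmk2, a3, ha3⟩, hbx⟩
          exact ⟨hbx, hmk2, a3, ha3⟩
      have hiota : Ordinal.type (Subrel ((· < ·) : Ordinal.{u} → Ordinal.{u} → Prop)
          (histSet ((x : Ordinal.{u}) + 1) hist (x : Ordinal.{u}) hltx b1)) = ι := by
        rw [hSeteq, type_subrel_inter T (x : Ordinal.{u}) x.2]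
        exact hx
      rw [hiota, hτ, FsetIdx] at hspec
      rcases hspec with ⟨a', ha'X, hne', heq'⟩ | hall
      · obtain ⟨γe, he, hmke, hmve⟩ := hXb a' ha'X
        have hγe : γe = (x : Ordinal.{u}) + 1 :=
          p.move_inj γe he _ hγ1len (hmve.trans (hfol2.trans heq').symm)
        exact not_maker_breaker (hγe ▸ hmke) hbt
      · have hcl2 : ∀ a' : ↥X, ∃ β, (β ∈ T ∧ β ≤ (x : Ordinal.{u})) ∧ ∃ hl : β < p.len,
            p.move β hl = s(Sum.inl (a' : A), Sum.inr b1) := by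
          rintro ⟨a', ha'⟩
          obtain ⟨β, hb, heqm⟩ := hall a' ha'
          have hble : β ≤ (x : Ordinal.{u}) := by
            rw [Ordinal.add_one_eq_succ] at hb; exact Order.lt_succ_iff.mp hb
          have hl : β < p.len := hb.trans hγ1len
          obtain ⟨γe, he, hmke, hmve⟩ := hXb a' ha'
          have hβγe : β = γe := p.move_inj β hl γe he (heqm.trans hmve.symm)
          exact ⟨β, ⟨⟨hl, hβγe ▸ hmke, a', heqm⟩, hble⟩, hl, heqm⟩
        choose g2 hgT2 hg2 using hcl2
        have g2inj : Function.Injective g2 := by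
          intro a a' hh
          obtain ⟨hl1, e1⟩ := hg2 a
          obtain ⟨hl2, e2⟩ := hg2 a'
          have hmv := move_congr hl1 hl2 hh
          exact Subtype.ext (cross_eq_iff.mp (e1.symm.trans (hmv.trans e2))).1
        have hcard2 : Cardinal.lift.{u+1} κ ≤ #↥{β | β ∈ T ∧ β ≤ (x : Ordinal.{u})} := by
          rw [← hXcard]
          have := Cardinal.lift_mk_le'.mpr
            ⟨⟨fun a => (⟨g2 a, hgT2 a⟩ : ↥{β | β ∈ T ∧ β ≤ (x : Ordinal.{u})}),
              fun a a' hh => g2inj (congrArg Subtype.val hh)⟩⟩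
          rwa [Cardinal.lift_id'.{u, u+1}] at this
        have h3' : #↥{β | β ∈ T ∧ β < (x : Ordinal.{u})} = ι.card := by
          have := (Ordinal.card_type (Subrel ((· < ·) : Ordinal.{u} → Ordinal.{u} → Prop)
            {β | β ∈ T ∧ β < (x : Ordinal.{u})})).symm
          refine this.trans ?_
          rw [type_subrel_inter T (x : Ordinal.{u}) x.2]
          exact congrArg Ordinal.card hx
        have hbound : #↥{β | β ∈ T ∧ β ≤ (x : Ordinal.{u})} ≤ ι.card + 1 := by
          have hsub : {β | β ∈ T ∧ β ≤ (x : Ordinal.{u})} ⊆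
              insert (x : Ordinal.{u}) {β | β ∈ T ∧ β < (x : Ordinal.{u})} := by
            rintro β ⟨hT2, hle⟩
            rcases lt_or_eq_of_le hle with h | h
            · exact Set.mem_insert_of_mem _ ⟨hT2, h⟩
            · rw [h]; exact Set.mem_insert _ _
          refine (Cardinal.mk_le_mk_of_subset hsub).trans ?_
          refine (Cardinal.mk_insert_le).trans ?_
          rw [h3']
        have hlt2 : ι.card + 1 < Cardinal.lift.{u+1} κ :=
          Cardinal.add_lt_of_lt (Cardinal.aleph0_le_lift.mpr hκ) (Cardinal.lt_ord.mp hι)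
            (lt_of_lt_of_le Cardinal.one_lt_aleph0 (Cardinal.aleph0_le_lift.mpr hκ))
        exact absurd (hcard2.trans hbound) (not_le.mpr hlt2)
    have hvS : ∀ b, rank (v b) ≤ idxX X := fun b =>
      key (v b) (by rintro a' ⟨a, rfl⟩; exact huv a b)
    have hBle : Cardinal.lift.{u+1} #B ≤ #↥(Set.Iic (idxX X)) := by
      have := Cardinal.lift_mk_le'.mpr
        ⟨⟨fun b => (⟨rank (v b), hvS b⟩ : ↥(Set.Iic (idxX X))),
          fun b b' hh => by
            have h2 := congrArg Subtype.val hh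
            exact vinj (rank_inj h2)⟩⟩
      rwa [Cardinal.lift_id'.{u, u+1}] at this
    have hIic : #↥(Set.Iic (idxX X)) ≤ Cardinal.lift.{u+1} κ := by
      have hIio : Set.Iic (idxX X) = Set.Iio (idxX X + 1) := by
        ext β; simp [Order.lt_add_one_iff]
      rw [hIio, Ordinal.mk_Iio_ordinal]
      apply Cardinal.lift_le.mpr
      rw [Ordinal.add_one_eq_succ, Ordinal.card_succ]
      have hcard : (idxX X).card ≤ κ := Order.lt_succ_iff.mp (Cardinal.lt_ord.mp (idx_lt X))
      calc (idxX X).card + 1 ≤ κ + 1 := by gcongr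
        _ = κ := Cardinal.add_one_eq hκ
    have hfin : Order.succ κ ≤ κ := by
      have := hBle.trans hIic
      rw [hB] at this
      exact Cardinal.lift_le.mp this
    exact absurd hfin (not_le.mpr (Order.lt_succ κ))
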